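/- arXiv:1301.0091 — 2 statements merged into one kernel-verified Lean document; each statement's English description precedes it below -/
import Mathlib

section
/- Let 0 ≤ t ≤ s ≤ T and let {ξ_i}_{i∈ℕ} be a sequence of ℝ^{d̃}-valued F^t_T-measurable random variables converging to 0 in P^t_0-probability. Then there exists a subsequence {ξ̂_i} such that for P^t_0-almost every ω ∈ Ω^t, the shifted sequence {ξ̂_i^{s,ω}}, with ξ̂_i^{s,ω}(ω̃) = ξ̂_i(ω ⊗_s ω̃), converges to 0 in P^s_0-probability on Ω^s. -/
open MeasureTheory Set Filter

noncomputable section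

/-- Canonical path space `Ω^{t,T}`: continuous `ℝ^d`-valued paths, encoded as functions on `ℝ`
that vanish on `(-∞, t]` and are constant on `[T, ∞)`. -/
def Paths (d : ℕ) (t T : ℝ) : Type :=
  {ω : ℝ → (Fin d → ℝ) //
    Continuous ω ∧ (∀ r, r ≤ t → ω r = 0) ∧ (∀ r, T ≤ r → ω r = ω T)}

/-- The natural filtration `F^t_s = σ(B^t_r : r ∈ [t, s])` of the canonical process. -/
def FF (d : ℕ) (t T s : ℝ) : MeasurableSpace (Paths d t T) :=
  ⨆ r ∈ Set.Icc t s, MeasurableSpace.comap (fun ω : Paths d t T => ω.1 r) inferInstance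

/-- Concatenation of paths at time `s`. -/
def concat {d : ℕ} {t s T : ℝ} (hts : t ≤ s) (hsT : s ≤ T)
    (ω : Paths d t T) (ϖ : Paths d s T) : Paths d t T :=
  ⟨fun r => ω.1 (min r s) + ϖ.1 (max r s), by
    refine ⟨?_, ?_, ?_⟩
    · exact (ω.2.1.comp (continuous_id.min continuous_const)).add
        (ϖ.2.1.comp (continuous_id.max continuous_const))
    · intro r hr
      show ω.1 (min r s) + ϖ.1 (max r s) = 0
      rw [ω.2.2.1 _ ((min_le_left r s).trans hr),
        ϖ.2.2.1 _ (max_le (hr.trans hts) le_rfl), add_zero]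
    · intro r hr
      have hsr : s ≤ r := hsT.trans hr
      show ω.1 (min r s) + ϖ.1 (max r s) = ω.1 (min T s) + ϖ.1 (max T s)
      rw [min_eq_right hsr, max_eq_left hsr, min_eq_right hsT, max_eq_left hsT,
        ϖ.2.2.2 r hr]⟩

/-- Product of `d` centered Gaussians with variance `v`. -/
def gaussianPi (d : ℕ) (v : ℝ) : Measure (Fin d → ℝ) :=
  Measure.pi fun _ => ProbabilityTheory.gaussianReal 0 v.toNNReal

instance instPathsMeasurableSpace (d : ℕ) (t T : ℝ) : MeasurableSpace (Paths d t T) :=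
  FF d t T T

/-- `P` is the Wiener measure on the path space `Ω^{t,T}`: a probability measure whose
increments are centered Gaussian with the correct variance and independent of the past. -/
structure IsWiener {d : ℕ} {t T : ℝ} (P : Measure (Paths d t T)) : Prop where
  prob : IsProbabilityMeasure P
  gauss_incr : ∀ r r' : ℝ, t ≤ r → r ≤ r' → r' ≤ T →
    P.map (fun ω : Paths d t T => ω.1 r' - ω.1 r) = gaussianPi d (r' - r)
  indep_incr : ∀ r r' : ℝ, t ≤ r → r ≤ r' → r' ≤ T →
    ∀ A : Set (Paths d t T), MeasurableSet[FF d t T r] A →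
    ∀ E : Set (Fin d → ℝ), MeasurableSet E →
      P (A ∩ (fun ω : Paths d t T => ω.1 r' - ω.1 r) ⁻¹' E) =
        P A * P ((fun ω : Paths d t T => ω.1 r' - ω.1 r) ⁻¹' E)

namespace WienerAux

open MeasurableSpace ProbabilityTheory

variable {d : ℕ} {t s T : ℝ}

instance gaussianPi_prob (d : ℕ) (v : ℝ) : IsProbabilityMeasure (gaussianPi d v) := by
  unfold gaussianPi; infer_instance

lemma FF_eq_instance : FF d t T T = instPathsMeasurableSpace d t T := rfl

lemma FF_mono {u u' : ℝ} (h : u ≤ u') : FF d t T u ≤ FF d t T u' := by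
  apply iSup₂_le
  intro r hr
  exact le_iSup₂ (f := fun r (_ : r ∈ Set.Icc t u') =>
    MeasurableSpace.comap (fun ω : Paths d t T => ω.1 r) inferInstance) r
    ⟨hr.1, hr.2.trans h⟩

lemma ev_measurable {u r : ℝ} (hr : r ≤ u) :
    Measurable[FF d t T u] (fun ω : Paths d t T => ω.1 r) := by
  rcases le_or_gt r t with h | h
  · have : (fun ω : Paths d t T => ω.1 r) = fun _ => 0 := funext fun ω => ω.2.2.1 r h
    rw [this]; exact measurable_const
  · intro E hE
    exact le_iSup₂ (f := fun r (_ : r ∈ Set.Icc t u) =>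
      MeasurableSpace.comap (fun ω : Paths d t T => ω.1 r) inferInstance) r ⟨h.le, hr⟩
      _ ⟨E, hE, rfl⟩

lemma ev_measurable' {r : ℝ} (hr : r ≤ T) :
    Measurable (fun ω : Paths d t T => ω.1 r) := ev_measurable hr

lemma incr_measurable {u r r' : ℝ} (hr : r ≤ u) (hr' : r' ≤ u) :
    Measurable[FF d t T u] (fun ω : Paths d t T => ω.1 r' - ω.1 r) :=
  (ev_measurable hr').sub (ev_measurable hr)

/-- Evaluation vector at finitely many times. -/
def vecEv {n : ℕ} (rs : Fin n → ℝ) (ω : Paths d t T) : Fin n → (Fin d → ℝ) :=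
  fun i => ω.1 (rs i)

lemma vecEv_measurable {n : ℕ} {u : ℝ} {rs : Fin n → ℝ} (h : ∀ i, rs i ≤ u) :
    Measurable[FF d t T u] (vecEv (d := d) (t := t) (T := T) rs) :=
  @measurable_pi_lambda _ _ _ (FF d t T u) _ _ fun i => ev_measurable (h i)

lemma concat_apply_le {hts : t ≤ s} {hsT : s ≤ T} (ω : Paths d t T) (ϖ : Paths d s T)
    {r : ℝ} (hr : r ≤ s) : (concat hts hsT ω ϖ).1 r = ω.1 r := by
  show ω.1 (min r s) + ϖ.1 (max r s) = ω.1 r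
  rw [min_eq_left hr, max_eq_right hr, ϖ.2.2.1 s le_rfl, add_zero]

lemma concat_apply_ge {hts : t ≤ s} {hsT : s ≤ T} (ω : Paths d t T) (ϖ : Paths d s T)
    {r : ℝ} (hr : s ≤ r) : (concat hts hsT ω ϖ).1 r = ω.1 s + ϖ.1 r := by
  show ω.1 (min r s) + ϖ.1 (max r s) = ω.1 s + ϖ.1 r
  rw [min_eq_right hr, max_eq_left hr]


lemma measurable_fst' {α β : Type*} (m₁ : MeasurableSpace α) (m₂ : MeasurableSpace β) :
    @Measurable _ _ (m₁.prod m₂) m₁ Prod.fst :=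
  measurable_iff_comap_le.mpr le_sup_left

lemma measurable_snd' {α β : Type*} (m₁ : MeasurableSpace α) (m₂ : MeasurableSpace β) :
    @Measurable _ _ (m₁.prod m₂) m₂ Prod.snd :=
  measurable_iff_comap_le.mpr le_sup_right

lemma comap_concat (hts : t ≤ s) (hsT : s ≤ T) (u : ℝ) :
    MeasurableSpace.comap
      (fun p : Paths d t T × Paths d s T => concat hts hsT p.1 p.2) (FF d t T u)
      = ⨆ r ∈ Set.Icc t u, MeasurableSpace.comap
          (fun p : Paths d t T × Paths d s T => p.1.1 (min r s) + p.2.1 (max r s))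
          inferInstance := by
  rw [FF]
  simp only [MeasurableSpace.comap_iSup]
  refine iSup_congr fun r => iSup_congr fun hr => ?_
  rw [MeasurableSpace.comap_comp]
  rfl

lemma measurable_concat_pair (hts : t ≤ s) (hsT : s ≤ T) :
    Measurable (fun p : Paths d t T × Paths d s T => concat hts hsT p.1 p.2) := by
  rw [measurable_iff_comap_le]
  rw [show (instPathsMeasurableSpace d t T) = FF d t T T from rfl, comap_concat]
  apply iSup₂_le
  intro r hr
  apply Measurable.comap_le
  exact ((ev_measurable' (min_le_of_right_le hsT)).comp
      (measurable_fst' _ _)).add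
    ((ev_measurable' (t := s) (max_le hr.2 hsT)).comp (measurable_snd' _ _))

lemma comap_concat_le_right (hts : t ≤ s) (hsT : s ≤ T) {u : ℝ} (hsu : s ≤ u) (huT : u ≤ T) :
    MeasurableSpace.comap
      (fun p : Paths d t T × Paths d s T => concat hts hsT p.1 p.2) (FF d t T u)
      ≤ (instPathsMeasurableSpace d t T).prod (FF d s T u) := by
  rw [comap_concat]
  apply iSup₂_le
  intro r hr
  apply Measurable.comap_le
  exact ((ev_measurable' (min_le_of_right_le hsT)).comp
      (measurable_fst' _ _)).add
    ((ev_measurable (t := s) (max_le hr.2 hsu)).comp (measurable_snd' _ _))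

lemma concat_preimage_eq (hts : t ≤ s) (hsT : s ≤ T) {u : ℝ} (hu : u ≤ s)
    {A : Set (Paths d t T)} (hA : MeasurableSet[FF d t T u] A) :
    (fun p : Paths d t T × Paths d s T => concat hts hsT p.1 p.2) ⁻¹' A
      = Prod.fst ⁻¹' A := by
  let m' : MeasurableSpace (Paths d t T) :=
    { MeasurableSet' := fun B =>
        (fun p : Paths d t T × Paths d s T => concat hts hsT p.1 p.2) ⁻¹' B
          = Prod.fst ⁻¹' B
      measurableSet_empty := by simp
      measurableSet_compl := fun B hB => by
        simp only [Set.preimage_compl]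
        rw [hB]
      measurableSet_iUnion := fun f hf => by
        simp only [Set.preimage_iUnion]
        exact iUnion_congr hf }
  suffices h : FF d t T u ≤ m' from h A hA
  apply iSup₂_le
  intro r hr B hB
  obtain ⟨E, _, rfl⟩ := hB
  show _ ⁻¹' (_ ⁻¹' E) = _
  ext p
  simp only [Set.mem_preimage]
  rw [concat_apply_le p.1 p.2 (hr.2.trans hu)]

lemma measurable_concat_left (hts : t ≤ s) (hsT : s ≤ T) (ω : Paths d t T) :
    Measurable (fun ϖ : Paths d s T => concat hts hsT ω ϖ) := by
  rw [measurable_iff_comap_le]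
  rw [show (instPathsMeasurableSpace d t T) = FF d t T T from rfl, FF]
  simp only [MeasurableSpace.comap_iSup]
  apply iSup₂_le
  intro r hr
  rw [MeasurableSpace.comap_comp]
  apply Measurable.comap_le
  exact measurable_const.add (ev_measurable' (t := s) (max_le hr.2 hsT))


variable (d t s T) in
/-- Increment properties of a measure on path space, restricted to increments that do not
straddle `s`. -/
def GoodMeas (μ : Measure (Paths d t T)) : Prop :=
  IsProbabilityMeasure μ ∧
  ∀ r r' : ℝ, t ≤ r → r ≤ r' → r' ≤ T → (r' ≤ s ∨ s ≤ r) →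
    (μ.map (fun ω : Paths d t T => ω.1 r' - ω.1 r) = gaussianPi d (r' - r) ∧
     ∀ A : Set (Paths d t T), MeasurableSet[FF d t T r] A →
     ∀ E : Set (Fin d → ℝ), MeasurableSet E →
       μ (A ∩ (fun ω : Paths d t T => ω.1 r' - ω.1 r) ⁻¹' E) =
         μ A * μ ((fun ω : Paths d t T => ω.1 r' - ω.1 r) ⁻¹' E))

lemma IsWiener.goodMeas {μ : Measure (Paths d t T)} (h : IsWiener μ) : GoodMeas d t s T μ :=
  ⟨h.prob, fun r r' h1 h2 h3 _ => ⟨h.gauss_incr r r' h1 h2 h3, h.indep_incr r r' h1 h2 h3⟩⟩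

lemma map_pair_eq {μ : Measure (Paths d t T)} (hμ : GoodMeas d t s T μ)
    {n : ℕ} (rs' : Fin n → ℝ) (rlast pt : ℝ)
    (h1 : ∀ i, rs' i ≤ pt) (h2 : t ≤ pt) (h3 : pt ≤ rlast) (h4 : rlast ≤ T)
    (hstr : rlast ≤ s ∨ s ≤ pt) :
    μ.map (fun ω : Paths d t T => (vecEv rs' ω, ω.1 rlast - ω.1 pt))
      = (μ.map (vecEv rs')).prod (gaussianPi d (rlast - pt)) := by
  haveI := hμ.1
  have hptT : pt ≤ T := h3.trans h4
  have hZm : Measurable[FF d t T pt] (vecEv (d := d) (t := t) (T := T) rs') :=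
    vecEv_measurable h1
  have hZamb : Measurable (vecEv (d := d) (t := t) (T := T) rs') :=
    vecEv_measurable fun i => (h1 i).trans hptT
  have hXamb : Measurable (fun ω : Paths d t T => ω.1 rlast - ω.1 pt) :=
    incr_measurable hptT h4
  have hindep : ProbabilityTheory.IndepFun (vecEv rs')
      (fun ω : Paths d t T => ω.1 rlast - ω.1 pt) μ := by
    rw [ProbabilityTheory.indepFun_iff_measure_inter_preimage_eq_mul]
    intro E F hE hF
    exact (hμ.2 pt rlast h2 h3 h4 hstr).2 _ (hZm hE) F hF
  have hmapeq := (ProbabilityTheory.indepFun_iff_map_prod_eq_prod_map_map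
    hZamb.aemeasurable hXamb.aemeasurable).mp hindep
  rw [hmapeq, (hμ.2 pt rlast h2 h3 h4 hstr).1]

lemma law_step {μ ν : Measure (Paths d t T)}
    (hμ : GoodMeas d t s T μ) (hν : GoodMeas d t s T ν)
    {n : ℕ} (rs' : Fin n → ℝ) (rlast pt : ℝ)
    (h1 : ∀ i, rs' i ≤ pt) (h2 : t ≤ pt) (h3 : pt ≤ rlast) (h4 : rlast ≤ T)
    (hstr : rlast ≤ s ∨ s ≤ pt)
    (prevval : (Fin n → Fin d → ℝ) → (Fin d → ℝ)) (hprevm : Measurable prevval)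
    (hprev : ∀ ω : Paths d t T, prevval (vecEv rs' ω) = ω.1 pt)
    (hIH : μ.map (vecEv rs') = ν.map (vecEv rs')) :
    μ.map (vecEv (Fin.snoc rs' rlast)) = ν.map (vecEv (Fin.snoc rs' rlast)) := by
  have hptT : pt ≤ T := h3.trans h4
  set F : (Fin n → Fin d → ℝ) × (Fin d → ℝ) → Fin (n + 1) → (Fin d → ℝ) :=
    fun q => Fin.snoc q.1 (prevval q.1 + q.2) with hFdef
  have hFm : Measurable F := by
    apply measurable_pi_lambda
    intro i
    induction i using Fin.lastCases with
    | last =>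
      have : (fun q : (Fin n → Fin d → ℝ) × (Fin d → ℝ) => F q (Fin.last n))
          = fun q => prevval q.1 + q.2 := by
        funext q; simp [hFdef, Fin.snoc_last]
      rw [this]
      exact (hprevm.comp measurable_fst).add measurable_snd
    | cast i =>
      have : (fun q : (Fin n → Fin d → ℝ) × (Fin d → ℝ) => F q (Fin.castSucc i))
          = fun q => q.1 i := by
        funext q; simp [hFdef, Fin.snoc_castSucc]
      rw [this]
      exact (measurable_pi_apply i).comp measurable_fst
  have hcomp : vecEv (d := d) (t := t) (T := T) (Fin.snoc rs' rlast)
      = F ∘ (fun ω => (vecEv rs' ω, ω.1 rlast - ω.1 pt)) := by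
    funext ω
    funext i
    induction i using Fin.lastCases with
    | last =>
      simp only [vecEv, Function.comp_apply, hFdef, Fin.snoc_last, hprev ω]
      abel
    | cast i =>
      simp only [vecEv, Function.comp_apply, hFdef, Fin.snoc_castSucc]
  have hZamb : Measurable (vecEv (d := d) (t := t) (T := T) rs') :=
    vecEv_measurable fun i => (h1 i).trans hptT
  have hXamb : Measurable (fun ω : Paths d t T => ω.1 rlast - ω.1 pt) :=
    incr_measurable hptT h4
  rw [hcomp, ← Measure.map_map hFm (hZamb.prodMk hXamb),
    ← Measure.map_map hFm (hZamb.prodMk hXamb),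
    map_pair_eq hμ rs' rlast pt h1 h2 h3 h4 hstr,
    map_pair_eq hν rs' rlast pt h1 h2 h3 h4 hstr, hIH]


lemma law_eq {μ ν : Measure (Paths d t T)}
    (hμ : GoodMeas d t s T μ) (hν : GoodMeas d t s T ν)
    {n : ℕ} (rs : Fin n → ℝ) (hmono : Monotone rs)
    (hrs : ∀ i, t ≤ rs i ∧ rs i ≤ T)
    (hgood : (∀ i, rs i ≤ s) ∨ ∃ k, rs k = s) :
    μ.map (vecEv rs) = ν.map (vecEv rs) := by
  induction n with
  | zero =>
    haveI := hμ.1; haveI := hν.1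
    have hμm : Measurable (vecEv (d := d) (t := t) (T := T) rs) :=
      vecEv_measurable (u := T) fun i => i.elim0
    haveI : IsProbabilityMeasure (μ.map (vecEv rs)) :=
      Measure.isProbabilityMeasure_map hμm.aemeasurable
    haveI : IsProbabilityMeasure (ν.map (vecEv rs)) :=
      Measure.isProbabilityMeasure_map hμm.aemeasurable
    haveI : Subsingleton (Fin 0 → Fin d → ℝ) := ⟨fun a b => funext fun i => i.elim0⟩
    ext A hA
    rcases A.eq_empty_or_nonempty with rfl | hne
    · simp
    · have hAu : A = Set.univ := by
        apply Set.eq_univ_of_forall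
        intro x
        obtain ⟨y, hy⟩ := hne
        rwa [Subsingleton.elim x y]
      rw [hAu]
      simp [measure_univ]
  | succ n IH =>
    have hmono' : Monotone (rs ∘ Fin.castSucc) := fun i j hij =>
      hmono (by simpa [Fin.castSucc_le_castSucc_iff] using hij)
    obtain ⟨pt, prevval, hprevm, hprev, h1, h2, h3⟩ :
        ∃ (pt : ℝ) (prevval : (Fin n → Fin d → ℝ) → Fin d → ℝ),
          Measurable prevval ∧
          (∀ ω : Paths d t T, prevval (vecEv (rs ∘ Fin.castSucc) ω) = ω.1 pt) ∧
          (∀ i : Fin n, (rs ∘ Fin.castSucc) i ≤ pt) ∧ t ≤ pt ∧ pt ≤ rs (Fin.last n) := by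
      rcases n with _ | m
      · refine ⟨t, fun _ => 0, measurable_const, ?_, fun i => i.elim0, le_rfl, (hrs _).1⟩
        intro ω; exact (ω.2.2.1 t le_rfl).symm
      · exact ⟨rs (Fin.castSucc (Fin.last m)), fun z => z (Fin.last m),
          measurable_pi_apply _, fun ω => rfl, fun i => hmono' (Fin.le_last i),
          (hrs _).1, hmono (Fin.le_last _)⟩
    have hstr : rs (Fin.last n) ≤ s ∨ s ≤ pt := by
      rcases hgood with hall | ⟨k, hk⟩
      · exact Or.inl (hall _)
      · rcases Fin.eq_castSucc_or_eq_last k with ⟨j, rfl⟩ | rfl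
        · exact Or.inr (hk ▸ h1 j)
        · exact Or.inl hk.le
    have hgood' : (∀ i, (rs ∘ Fin.castSucc) i ≤ s) ∨ ∃ k, (rs ∘ Fin.castSucc) k = s := by
      rcases hgood with hall | ⟨k, hk⟩
      · exact Or.inl fun i => hall _
      · rcases Fin.eq_castSucc_or_eq_last k with ⟨j, rfl⟩ | rfl
        · exact Or.inr ⟨j, hk⟩
        · exact Or.inl fun i => le_of_le_of_eq (hmono (Fin.le_last _)) hk
    have hIH := IH (rs ∘ Fin.castSucc) hmono' (fun i => hrs _) hgood'
    have hstep := law_step hμ hν (rs ∘ Fin.castSucc) (rs (Fin.last n)) pt h1 h2 h3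
      (hrs _).2 hstr prevval hprevm hprev hIH
    have hsn : (Fin.snoc (rs ∘ Fin.castSucc) (rs (Fin.last n)) : Fin (n + 1) → ℝ) = rs :=
      Fin.snoc_init_self rs
    rwa [hsn] at hstep


lemma measure_eq_of_goodMeas (hts : t ≤ s) (hsT : s ≤ T) {μ ν : Measure (Paths d t T)}
    (hμ : GoodMeas d t s T μ) (hν : GoodMeas d t s T ν) : μ = ν := by
  haveI := hμ.1; haveI := hν.1
  set mm : ℝ → MeasurableSpace (Paths d t T) := fun r =>
    MeasurableSpace.comap (fun ω : Paths d t T => ω.1 r) inferInstance with hmm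
  refine ext_of_generate_finite
    (piiUnionInter (fun r => { A | MeasurableSet[mm r] A }) (Set.Icc t T)) ?_ ?_ ?_ (by simp)
  · exact (generateFrom_piiUnionInter_measurableSet mm (Set.Icc t T)).symm
  · refine isPiSystem_piiUnionInter _ (fun r A hA B hB _ => ?_) _
    simp only [Set.mem_setOf_eq] at *
    exact hA.inter hB
  · rintro A ⟨Fs, hFsub, f, hf, rfl⟩
    classical
    set E : ℝ → Set (Fin d → ℝ) := fun r =>
      if h : ∃ E, MeasurableSet E ∧ (fun ω : Paths d t T => ω.1 r) ⁻¹' E = f r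
      then h.choose else Set.univ with hEdef
    have hEmeas : ∀ r, MeasurableSet (E r) := by
      intro r
      by_cases h : ∃ E, MeasurableSet E ∧ (fun ω : Paths d t T => ω.1 r) ⁻¹' E = f r
      · rw [hEdef]; dsimp only; rw [dif_pos h]; exact h.choose_spec.1
      · rw [hEdef]; dsimp only; rw [dif_neg h]; exact MeasurableSet.univ
    have hEf : ∀ r ∈ Fs, (fun ω : Paths d t T => ω.1 r) ⁻¹' (E r) = f r := by
      intro r hr
      have h : ∃ E, MeasurableSet E ∧ (fun ω : Paths d t T => ω.1 r) ⁻¹' E = f r := hf r hr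
      rw [hEdef]
      simp only [dif_pos h]
      exact h.choose_spec.2
    set E' : ℝ → Set (Fin d → ℝ) := fun r => if r ∈ Fs then E r else Set.univ with hE'def
    have hE'meas : ∀ r, MeasurableSet (E' r) := by
      intro r
      by_cases h : r ∈ Fs
      · rw [hE'def]; dsimp only; rw [if_pos h]; exact hEmeas r
      · rw [hE'def]; dsimp only; rw [if_neg h]; exact MeasurableSet.univ
    set F' : Finset ℝ := insert s Fs with hF'
    have hAeq : (⋂ r ∈ Fs, f r)
        = ⋂ r ∈ F', (fun ω : Paths d t T => ω.1 r) ⁻¹' (E' r) := by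
      have hsub : ∀ r ∈ Fs, (fun ω : Paths d t T => ω.1 r) ⁻¹' (E' r) = f r := by
        intro r hr
        rw [hE'def]
        simp only [if_pos hr]
        exact hEf r hr
      rw [hF', Finset.set_biInter_insert]
      rw [Set.iInter₂_congr hsub]
      by_cases hs : s ∈ Fs
      · rw [hE'def]
        simp only [if_pos hs]
        rw [hEf s hs]
        exact (Set.inter_eq_right.mpr (Set.biInter_subset_of_mem hs)).symm
      · rw [hE'def]
        simp only [if_neg hs]
        rw [Set.preimage_univ, Set.univ_inter]
    set n := F'.card with hn
    set iso := F'.orderIsoOfFin hn.symm with hiso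
    set rs : Fin n → ℝ := fun i => (iso i : ℝ) with hrsdef
    have hmono : Monotone rs := fun i j hij => Subtype.coe_le_coe.mpr (iso.monotone hij)
    have hmem : ∀ i, rs i ∈ F' := fun i => (iso i).2
    have hrsIcc : ∀ i, t ≤ rs i ∧ rs i ≤ T := by
      intro i
      have := hmem i
      rw [hF', Finset.mem_insert] at this
      rcases this with h | h
      · exact ⟨h ▸ hts, h ▸ hsT⟩
      · exact ⟨(hFsub h).1, (hFsub h).2⟩
    have hgood : (∀ i, rs i ≤ s) ∨ ∃ k, rs k = s := by
      refine Or.inr ⟨iso.symm ⟨s, by rw [hF']; exact Finset.mem_insert_self s Fs⟩, ?_⟩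
      rw [hrsdef]
      simp
    set B : Set (Fin n → Fin d → ℝ) := Set.univ.pi (fun i => E' (rs i)) with hB
    have hBmeas : MeasurableSet B := MeasurableSet.univ_pi fun i => hE'meas _
    have hpre : vecEv (d := d) (t := t) (T := T) rs ⁻¹' B
        = ⋂ r ∈ F', (fun ω : Paths d t T => ω.1 r) ⁻¹' (E' r) := by
      ext ω
      simp only [Set.mem_preimage, hB, Set.mem_pi, Set.mem_univ, forall_true_left,
        Set.mem_iInter, vecEv]
      constructor
      · intro h r hr
        obtain ⟨i, hi⟩ : ∃ i, rs i = r := ⟨iso.symm ⟨r, hr⟩, by rw [hrsdef]; simp⟩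
        rw [← hi]
        exact h i
      · intro h i
        exact h (rs i) (hmem i)
    have hvm : Measurable (vecEv (d := d) (t := t) (T := T) rs) :=
      vecEv_measurable (u := T) fun i => (hrsIcc i).2
    rw [hAeq, ← hpre, ← Measure.map_apply hvm hBmeas, ← Measure.map_apply hvm hBmeas,
      law_eq hμ hν rs hmono hrsIcc hgood]


lemma prod_fst_apply {α β : Type*} [MeasurableSpace α] [MeasurableSpace β]
    (P : Measure α) (Q : Measure β) [IsProbabilityMeasure Q] [SFinite P]
    {S : Set α} (hS : MeasurableSet S) : (P.prod Q) (Prod.fst ⁻¹' S) = P S := by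
  rw [← Measure.map_apply measurable_fst hS, Measure.map_fst_prod]
  simp

lemma prod_snd_apply {α β : Type*} [MeasurableSpace α] [MeasurableSpace β]
    (P : Measure α) (Q : Measure β) [IsProbabilityMeasure P] [SFinite Q]
    {S : Set β} (hS : MeasurableSet S) : (P.prod Q) (Prod.snd ⁻¹' S) = Q S := by
  rw [← Measure.map_apply measurable_snd hS, Measure.map_snd_prod]
  simp

lemma prod_mono_right {α β : Type*} (m₁ : MeasurableSpace α) {m₂ m₂' : MeasurableSpace β}
    (h : m₂ ≤ m₂') : m₁.prod m₂ ≤ m₁.prod m₂' :=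
  sup_le_sup_left (MeasurableSpace.comap_mono h) _

/-- Under a product measure, a set measurable in `full × F^s_r` is independent of
an increment of the second coordinate after `r`. -/
lemma prod_indep_snd {P : Measure (Paths d t T)} {Q : Measure (Paths d s T)}
    [IsProbabilityMeasure P] [IsProbabilityMeasure Q]
    (hQ : IsWiener Q) {r r' : ℝ} (h1 : s ≤ r) (h2 : r ≤ r') (h3 : r' ≤ T)
    {C : Set (Paths d t T × Paths d s T)}
    (hC : MeasurableSet[(instPathsMeasurableSpace d t T).prod (FF d s T r)] C)
    {E : Set (Fin d → ℝ)} (hE : MeasurableSet E) :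
    (P.prod Q) (C ∩ Prod.snd ⁻¹' ((fun ϖ : Paths d s T => ϖ.1 r' - ϖ.1 r) ⁻¹' E))
      = (P.prod Q) C * Q ((fun ϖ : Paths d s T => ϖ.1 r' - ϖ.1 r) ⁻¹' E) := by
  have hrT : r ≤ T := h2.trans h3
  set B : Set (Paths d s T) := (fun ϖ : Paths d s T => ϖ.1 r' - ϖ.1 r) ⁻¹' E with hBdef
  have hBmeas : MeasurableSet B := (incr_measurable (t := s) hrT h3) hE
  have hCfull : MeasurableSet C := by
    have hle : (instPathsMeasurableSpace d t T).prod (FF d s T r)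
        ≤ (instPathsMeasurableSpace d t T).prod (FF d s T T) :=
      prod_mono_right _ (FF_mono hrT)
    exact hle C hC
  rw [Measure.prod_apply (hCfull.inter (measurable_snd hBmeas)), Measure.prod_apply hCfull]
  have hslice : ∀ x : Paths d t T, Q (Prod.mk x ⁻¹' (C ∩ Prod.snd ⁻¹' B))
      = Q (Prod.mk x ⁻¹' C) * Q B := by
    intro x
    have hsl : MeasurableSet[FF d s T r] (Prod.mk x ⁻¹' C) := by
      have hm : @Measurable (Paths d s T) (Paths d t T × Paths d s T) (FF d s T r)
          ((instPathsMeasurableSpace d t T).prod (FF d s T r)) (Prod.mk x) :=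
        @measurable_prodMk_left _ _ (instPathsMeasurableSpace d t T) (FF d s T r) x
      exact hm hC
    have heq : Prod.mk x ⁻¹' (C ∩ Prod.snd ⁻¹' B) = (Prod.mk x ⁻¹' C) ∩ B := rfl
    rw [heq]
    exact hQ.indep_incr r r' h1 h2 h3 _ hsl E hE
  calc ∫⁻ x, Q (Prod.mk x ⁻¹' (C ∩ Prod.snd ⁻¹' B)) ∂P
      = ∫⁻ x, Q (Prod.mk x ⁻¹' C) * Q B ∂P := lintegral_congr hslice
    _ = (∫⁻ x, Q (Prod.mk x ⁻¹' C) ∂P) * Q B := lintegral_mul_const' _ _ (measure_ne_top Q B)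

lemma goodMeas_concat (hts : t ≤ s) (hsT : s ≤ T)
    {P : Measure (Paths d t T)} {Q : Measure (Paths d s T)}
    (hP : IsWiener P) (hQ : IsWiener Q) :
    GoodMeas d t s T ((P.prod Q).map
      (fun p : Paths d t T × Paths d s T => concat hts hsT p.1 p.2)) := by
  haveI := hP.prob; haveI := hQ.prob
  have hΦ := measurable_concat_pair (d := d) hts hsT
  constructor
  · exact Measure.isProbabilityMeasure_map hΦ.aemeasurable
  · intro r r' h1 h2 h3 hstr
    have hrT : r ≤ T := h2.trans h3
    have hincrm : Measurable (fun ω : Paths d t T => ω.1 r' - ω.1 r) :=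
      incr_measurable hrT h3
    rcases hstr with hc | hc
    · -- r' ≤ s : everything happens in the first coordinate
      have hfun : (fun ω : Paths d t T => ω.1 r' - ω.1 r)
            ∘ (fun p : Paths d t T × Paths d s T => concat hts hsT p.1 p.2)
          = (fun ω : Paths d t T => ω.1 r' - ω.1 r) ∘ Prod.fst := by
        funext p
        show (concat hts hsT p.1 p.2).1 r' - (concat hts hsT p.1 p.2).1 r = _
        rw [concat_apply_le p.1 p.2 hc, concat_apply_le p.1 p.2 (h2.trans hc)]
        rfl
      constructor
      · rw [Measure.map_map hincrm hΦ, hfun, ← Measure.map_map hincrm measurable_fst,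
          Measure.map_fst_prod]
        simp only [measure_univ, one_smul]
        exact hP.gauss_incr r r' h1 h2 h3
      · intro A hA E hE
        have hAamb : MeasurableSet A := FF_mono hrT A hA
        have hpreA : (fun p : Paths d t T × Paths d s T => concat hts hsT p.1 p.2) ⁻¹' A
            = Prod.fst ⁻¹' A := concat_preimage_eq hts hsT (h2.trans hc) hA
        have hpreE : (fun p : Paths d t T × Paths d s T => concat hts hsT p.1 p.2) ⁻¹'
              ((fun ω : Paths d t T => ω.1 r' - ω.1 r) ⁻¹' E)
            = Prod.fst ⁻¹' ((fun ω : Paths d t T => ω.1 r' - ω.1 r) ⁻¹' E) := by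
          rw [← Set.preimage_comp, hfun, Set.preimage_comp]
        rw [Measure.map_apply hΦ (hAamb.inter (hincrm hE)),
          Measure.map_apply hΦ hAamb, Measure.map_apply hΦ (hincrm hE),
          Set.preimage_inter, hpreA, hpreE, ← Set.preimage_inter,
          prod_fst_apply P Q (hAamb.inter (hincrm hE)), prod_fst_apply P Q hAamb,
          prod_fst_apply P Q (hincrm hE)]
        exact hP.indep_incr r r' h1 h2 h3 A hA E hE
    · -- s ≤ r : the increment only involves the second coordinate
      have hfun : (fun ω : Paths d t T => ω.1 r' - ω.1 r)
            ∘ (fun p : Paths d t T × Paths d s T => concat hts hsT p.1 p.2)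
          = (fun ϖ : Paths d s T => ϖ.1 r' - ϖ.1 r) ∘ Prod.snd := by
        funext p
        show (concat hts hsT p.1 p.2).1 r' - (concat hts hsT p.1 p.2).1 r = _
        rw [concat_apply_ge p.1 p.2 (hc.trans h2), concat_apply_ge p.1 p.2 hc]
        show p.1.1 s + p.2.1 r' - (p.1.1 s + p.2.1 r) = p.2.1 r' - p.2.1 r
        abel
      have hincrmQ : Measurable (fun ϖ : Paths d s T => ϖ.1 r' - ϖ.1 r) :=
        incr_measurable (t := s) hrT h3
      constructor
      · rw [Measure.map_map hincrm hΦ, hfun, ← Measure.map_map hincrmQ measurable_snd,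
          Measure.map_snd_prod]
        simp only [measure_univ, one_smul]
        exact hQ.gauss_incr r r' hc h2 h3
      · intro A hA E hE
        have hAamb : MeasurableSet A := FF_mono hrT A hA
        have hpreA : MeasurableSet[(instPathsMeasurableSpace d t T).prod (FF d s T r)]
            ((fun p : Paths d t T × Paths d s T => concat hts hsT p.1 p.2) ⁻¹' A) :=
          comap_concat_le_right hts hsT hc hrT _ ⟨A, hA, rfl⟩
        have hpreE : (fun p : Paths d t T × Paths d s T => concat hts hsT p.1 p.2) ⁻¹'
              ((fun ω : Paths d t T => ω.1 r' - ω.1 r) ⁻¹' E)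
            = Prod.snd ⁻¹' ((fun ϖ : Paths d s T => ϖ.1 r' - ϖ.1 r) ⁻¹' E) := by
          rw [← Set.preimage_comp, hfun, Set.preimage_comp]
        rw [Measure.map_apply hΦ (hAamb.inter (hincrm hE)),
          Measure.map_apply hΦ hAamb, Measure.map_apply hΦ (hincrm hE),
          Set.preimage_inter, hpreE,
          prod_indep_snd hQ hc h2 h3 hpreA hE,
          prod_snd_apply P Q (hincrmQ hE)]

lemma concat_law (hts : t ≤ s) (hsT : s ≤ T)
    {P : Measure (Paths d t T)} {Q : Measure (Paths d s T)}
    (hP : IsWiener P) (hQ : IsWiener Q) :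
    (P.prod Q).map (fun p : Paths d t T × Paths d s T => concat hts hsT p.1 p.2) = P :=
  measure_eq_of_goodMeas hts hsT (goodMeas_concat hts hsT hP hQ) (IsWiener.goodMeas hP)

end WienerAux

/-- Let `0 ≤ t ≤ s ≤ T` and let `{ξ_i}` be a sequence of `ℝ^{d'}`-valued
`F^t_T`-measurable random variables converging to `0` in `P^t_0`-probability.  Then there is
a subsequence `{ξ_{φ(i)}}` such that for `P^t_0`-a.e. `ω ∈ Ω^t`, the shifted sequence
`ξ_{φ(i)}^{s,ω}` converges to `0` in `P^s_0`-probability on `Ω^s`. -/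
theorem shifted_convergence_in_probability (d d' : ℕ) (t s T : ℝ) (ht : 0 ≤ t)
    (hts : t ≤ s) (hsT : s ≤ T)
    (P : Measure (Paths d t T)) (hP : IsWiener P)
    (Q : Measure (Paths d s T)) (hQ : IsWiener Q)
    (ξ : ℕ → Paths d t T → (Fin d' → ℝ))
    (hmeas : ∀ i, Measurable[FF d t T T] (ξ i))
    (hconv : ∀ ε : ℝ, 0 < ε →
      Tendsto (fun i => P {ω : Paths d t T | ε < ‖ξ i ω‖}) atTop (nhds 0)) :
    ∃ φ : ℕ → ℕ, StrictMono φ ∧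
      ∀ᵐ ω ∂P, ∀ ε : ℝ, 0 < ε →
        Tendsto (fun i => Q {ϖ : Paths d s T | ε < ‖ξ (φ i) (concat hts hsT ω ϖ)‖})
          atTop (nhds 0) := by
  classical
  haveI := hP.prob; haveI := hQ.prob
  have htim : TendstoInMeasure P ξ atTop (fun _ => (0 : Fin d' → ℝ)) := by
    rw [tendstoInMeasure_iff_dist]
    intro ε hε
    have hsub : ∀ i, {x : Paths d t T | ε ≤ dist (ξ i x) ((fun _ => (0 : Fin d' → ℝ)) x)}
        ⊆ {x | ε / 2 < ‖ξ i x‖} := by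
      intro i x hx
      simp only [Set.mem_setOf_eq, dist_zero_right] at hx ⊢
      linarith
    exact tendsto_of_tendsto_of_tendsto_of_le_of_le tendsto_const_nhds
      (hconv (ε / 2) (by linarith)) (fun i => zero_le) (fun i => measure_mono (hsub i))
  obtain ⟨φ, hφmono, hae⟩ := htim.exists_seq_tendsto_ae
  refine ⟨φ, hφmono, ?_⟩
  set N : Set (Paths d t T) :=
    {ω | ¬ Tendsto (fun i => ξ (φ i) ω) atTop (nhds (0 : Fin d' → ℝ))} with hN
  have hPN : P N = 0 := by
    rw [hN, ← ae_iff]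
    exact hae
  set N' := toMeasurable P N with hN'
  have hN'meas : MeasurableSet N' := measurableSet_toMeasurable P N
  have hPN' : P N' = 0 := by rw [hN', measure_toMeasurable]; exact hPN
  have hΦ := WienerAux.measurable_concat_pair (d := d) hts hsT
  have hkey : (P.prod Q)
      ((fun p : Paths d t T × Paths d s T => concat hts hsT p.1 p.2) ⁻¹' N') = 0 := by
    rw [← Measure.map_apply hΦ hN'meas, WienerAux.concat_law hts hsT hP hQ]
    exact hPN'
  have hmeasS : MeasurableSet
      ((fun p : Paths d t T × Paths d s T => concat hts hsT p.1 p.2) ⁻¹' N') :=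
    hΦ hN'meas
  have hker : ∀ᵐ ω ∂P, Q (Prod.mk ω ⁻¹'
      ((fun p : Paths d t T × Paths d s T => concat hts hsT p.1 p.2) ⁻¹' N')) = 0 := by
    rw [Measure.prod_apply hmeasS] at hkey
    have hm : Measurable (fun ω : Paths d t T => Q (Prod.mk ω ⁻¹'
        ((fun p : Paths d t T × Paths d s T => concat hts hsT p.1 p.2) ⁻¹' N'))) :=
      measurable_measure_prodMk_left hmeasS
    exact (lintegral_eq_zero_iff hm).mp hkey
  filter_upwards [hker] with ω hω
  intro ε hε
  have hQae : ∀ᵐ ϖ ∂Q,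
      Tendsto (fun i => ξ (φ i) (concat hts hsT ω ϖ)) atTop (nhds (0 : Fin d' → ℝ)) := by
    rw [ae_iff]
    refine measure_mono_null ?_ hω
    intro ϖ hϖ
    exact subset_toMeasurable P N (hϖ : concat hts hsT ω ϖ ∈ N)
  have htimQ : TendstoInMeasure Q (fun i ϖ => ξ (φ i) (concat hts hsT ω ϖ)) atTop
      (fun _ => (0 : Fin d' → ℝ)) :=
    tendstoInMeasure_of_tendsto_ae
      (fun n => ((hmeas (φ n)).comp
        (WienerAux.measurable_concat_left hts hsT ω)).aestronglyMeasurable) hQae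
  have h2 := (tendstoInMeasure_iff_dist.mp htimQ) ε hε
  refine tendsto_of_tendsto_of_tendsto_of_le_of_le tendsto_const_nhds h2
    (fun i => zero_le) (fun i => measure_mono ?_)
  intro ϖ hϖ
  simp only [Set.mem_setOf_eq, dist_zero_right] at hϖ ⊢
  exact hϖ.le

end
end

section
/- Let t ∈ [0,T], let {X_s}_{s∈[t,T]} be an ℝ^d-valued process on Ω^t all of whose paths are continuous and start from 0, let Ω_X = X(Ω^t) be its image in Ω^t, and for s ∈ [t,T] let G^{Ω_X}_s = {(A ∩ Ω_X) ∪ A' : A ∈ F^t_s, A' ⊆ Ω_X^c}. If K is an M-valued F^X-progressively measurable process (M a metric space), then K_s is constant on each fiber X^{-1}(ω ⊗_s Ω^s), and for any fixed m₀ ∈ M the process K_s(ω) := m₀·1_{ω∉Ω_X} + K_s(X^{-1}(ω))·1_{ω∈Ω_X} is well defined and progressively measurable with respect to the filtration {G^{Ω_X}_s}_{s∈[t,T]}. -/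
open MeasureTheory Set Filter
open scoped Classical

noncomputable section

/-- The natural filtration `F^X_s = σ(X_r : r ∈ [t,s])` of the process `X`,
viewed as a map from `Ω^t` to `Ω^t`. -/
def FX (d : ℕ) (t T : ℝ) (X : Paths d t T → Paths d t T) (s : ℝ) :
    MeasurableSpace (Paths d t T) :=
  ⨆ r ∈ Set.Icc t s, MeasurableSpace.comap (fun ω : Paths d t T => (X ω).1 r) inferInstance

/-- The σ-field `G^{Ω_X}_s = {(A ∩ Ω_X) ∪ A' : A ∈ F^t_s, A' ⊆ Ω_Xᶜ}`, where
`Ω_X = X(Ω^t)` is the image of `X`. -/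
def GX (d : ℕ) (t T : ℝ) (X : Paths d t T → Paths d t T) (s : ℝ) :
    MeasurableSpace (Paths d t T) :=
  MeasurableSpace.generateFrom
    {B : Set (Paths d t T) | ∃ A A' : Set (Paths d t T),
      MeasurableSet[FF d t T s] A ∧ A' ⊆ (Set.range X)ᶜ ∧ B = (A ∩ Set.range X) ∪ A'}

/-- Let `X : Ω^t → Ω^t` be a process all of whose paths are continuous
and start from `0` (encoded by its taking values in `Ω^t`), and let `K` be an `M`-valued
`F^X`-progressively measurable process.  Then `K_s` is constant on each fiber
`X⁻¹(ω ⊗_s Ω^s)`, and for any `m₀ ∈ M` the process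
`K'_s(ω) = m₀` on `Ω_Xᶜ`, `K'_s(ω) = K_s(X⁻¹(ω))` on `Ω_X`,
is progressively measurable with respect to the filtration `{G^{Ω_X}_s}`. -/
theorem image_filtration_progressive {M : Type*}
    [MetricSpace M] [MeasurableSpace M] [BorelSpace M]
    (d : ℕ) (t T : ℝ) (ht : 0 ≤ t) (htT : t ≤ T)
    (X : Paths d t T → Paths d t T) (K : ℝ → Paths d t T → M)
    (hK : ∀ r : ℝ, t ≤ r → r ≤ T →
      Measurable[(inferInstance : MeasurableSpace (Set.Icc t r)).prod (FX d t T X r)]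
        fun p : Set.Icc t r × Paths d t T => K p.1 p.2)
    (m₀ : M) :
    (∀ s : ℝ, ∀ hts : t ≤ s, ∀ hsT : s ≤ T, ∀ ω ω₁ ω₂ : Paths d t T,
      (∃ ϖ : Paths d s T, X ω₁ = concat hts hsT ω ϖ) →
      (∃ ϖ : Paths d s T, X ω₂ = concat hts hsT ω ϖ) →
      K s ω₁ = K s ω₂) ∧
    (∀ r : ℝ, t ≤ r → r ≤ T →
      Measurable[(inferInstance : MeasurableSpace (Set.Icc t r)).prod (GX d t T X r)]
        fun p : Set.Icc t r × Paths d t T =>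
          if h : ∃ ω', X ω' = p.2 then K p.1 h.choose else m₀) := by
  have hFX : ∀ s : ℝ, FX d t T X s = MeasurableSpace.comap X (FF d t T s) := by
    intro s
    unfold FX FF
    simp_rw [MeasurableSpace.comap_iSup, MeasurableSpace.comap_comp]
    rfl
  constructor
  · -- Part 1 : constancy on fibers
    intro s hts hsT ω ω₁ ω₂ h₁ h₂
    -- K s is FX s - measurable
    have h1 : Measurable[FX d t T X s] (K s) := by
      have := hK s hts hsT
      have hmk : @Measurable _ _ (FX d t T X s)
          ((inferInstance : MeasurableSpace (Set.Icc t s)).prod (FX d t T X s))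
          (Prod.mk (⟨s, hts, le_rfl⟩ : Set.Icc t s)) :=
        @measurable_prodMk_left _ _ inferInstance (FX d t T X s) _
      exact this.comp hmk
    -- the paths X ω₁ and X ω₂ agree on [t, s]
    have hagree : ∀ q ∈ Set.Icc t s, (X ω₁).1 q = (X ω₂).1 q := by
      intro q hq
      obtain ⟨ϖ₁, e₁⟩ := h₁
      obtain ⟨ϖ₂, e₂⟩ := h₂
      have key : ∀ (ϖ : Paths d s T), (concat hts hsT ω ϖ).1 q = ω.1 q := by
        intro ϖ
        show ω.1 (min q s) + ϖ.1 (max q s) = ω.1 q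
        rw [min_eq_left hq.2, max_eq_right hq.2, ϖ.2.2.1 s le_rfl, add_zero]
      rw [e₁, e₂, key, key]
    -- the σ-algebra of sets not separating ω₁ and ω₂
    let Λ : MeasurableSpace (Paths d t T) :=
      { MeasurableSet' := fun A => (ω₁ ∈ A ↔ ω₂ ∈ A)
        measurableSet_empty := Iff.rfl
        measurableSet_compl := fun A hA => not_congr hA
        measurableSet_iUnion := fun f hf => by
          simp only [Set.mem_iUnion]
          exact exists_congr hf }
    have hle : FX d t T X s ≤ Λ := by
      refine iSup₂_le fun q hq => ?_
      rintro A ⟨B, -, rfl⟩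
      show (X ω₁).1 q ∈ B ↔ (X ω₂).1 q ∈ B
      rw [hagree q hq]
    have hmem : ω₂ ∈ (K s) ⁻¹' {K s ω₁} :=
      (hle _ (h1 (measurableSet_singleton (K s ω₁)))).mp rfl
    exact (hmem : K s ω₂ = K s ω₁).symm
  · -- Part 2 : progressive measurability w.r.t. GX
    intro r htr hrT
    set S : Set (Paths d t T) := Set.range X with hSdef
    have hS : MeasurableSet[GX d t T X r] S :=
      MeasurableSpace.measurableSet_generateFrom
        ⟨Set.univ, ∅, MeasurableSet.univ, Set.empty_subset _, by simp [hSdef]⟩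
    have hAS : ∀ A : Set (Paths d t T), MeasurableSet[FF d t T r] A →
        MeasurableSet[GX d t T X r] (A ∩ S) :=
      fun A hA => MeasurableSpace.measurableSet_generateFrom
        ⟨A, ∅, hA, Set.empty_subset _, by simp [hSdef]⟩
    set mI : MeasurableSpace (Set.Icc t r) := inferInstance with hmI
    set mG : MeasurableSpace (Set.Icc t r × Paths d t T) := mI.prod (GX d t T X r) with hmG
    set mF : MeasurableSpace (Set.Icc t r × Paths d t T) := mI.prod (FF d t T r) with hmF
    have hsndG : @Measurable _ _ mG (GX d t T X r)
        (Prod.snd : Set.Icc t r × Paths d t T → Paths d t T) :=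
      @measurable_snd _ _ mI (GX d t T X r)
    have hfstG : @Measurable _ _ mG mI
        (Prod.fst : Set.Icc t r × Paths d t T → Set.Icc t r) :=
      @measurable_fst _ _ mI (GX d t T X r)
    have hSuniv : MeasurableSet[mG] (Prod.snd ⁻¹' S : Set (Set.Icc t r × Paths d t T)) :=
      hsndG hS
    -- key product fact
    have hprod : mI.prod (FX d t T X r)
        = MeasurableSpace.comap (Prod.map (id : Set.Icc t r → Set.Icc t r) X) mF := by
      rw [hFX]
      show mI.comap Prod.fst ⊔ (MeasurableSpace.comap X (FF d t T r)).comap Prod.snd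
        = MeasurableSpace.comap _ (mI.comap Prod.fst ⊔ (FF d t T r).comap Prod.snd)
      rw [MeasurableSpace.comap_sup, MeasurableSpace.comap_comp, MeasurableSpace.comap_comp,
        MeasurableSpace.comap_comp]
      rfl
    -- intersecting an mF-measurable set with (snd ⁻¹' S) gives an mG-measurable set
    have claim : ∀ C : Set (Set.Icc t r × Paths d t T), MeasurableSet[mF] C →
        MeasurableSet[mG] (C ∩ Prod.snd ⁻¹' S) := by
      let m' : MeasurableSpace (Set.Icc t r × Paths d t T) :=
        { MeasurableSet' := fun C => MeasurableSet[mG] (C ∩ Prod.snd ⁻¹' S)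
          measurableSet_empty := by simpa using @MeasurableSet.empty _ mG
          measurableSet_compl := fun C hC => by
            show MeasurableSet[mG] (Cᶜ ∩ Prod.snd ⁻¹' S)
            have : Cᶜ ∩ Prod.snd ⁻¹' S = Prod.snd ⁻¹' S \ (C ∩ Prod.snd ⁻¹' S) := by
              ext p; by_cases hp : p.2 ∈ S <;> simp [hp]
            rw [this]
            exact hSuniv.diff hC
          measurableSet_iUnion := fun f hf => by
            show MeasurableSet[mG] ((⋃ i, f i) ∩ Prod.snd ⁻¹' S)
            rw [Set.iUnion_inter]
            exact MeasurableSet.iUnion hf }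
      have hle : mF ≤ m' := by
        rw [hmF]
        show mI.comap Prod.fst ⊔ (FF d t T r).comap Prod.snd ≤ m'
        refine sup_le ?_ ?_
        · rintro A ⟨B, hB, rfl⟩
          show MeasurableSet[mG] (Prod.fst ⁻¹' B ∩ Prod.snd ⁻¹' S)
          exact (hfstG hB).inter hSuniv
        · rintro A ⟨B, hB, rfl⟩
          show MeasurableSet[mG] (Prod.snd ⁻¹' B ∩ Prod.snd ⁻¹' S)
          have : Prod.snd ⁻¹' B ∩ Prod.snd ⁻¹' S
              = (Prod.snd ⁻¹' (B ∩ S) : Set (Set.Icc t r × Paths d t T)) := by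
            ext p; simp [Set.mem_inter_iff]
          rw [this]
          exact hsndG (hAS B hB)
      exact fun C hC => hle C hC
    -- now the main measurability
    intro B hB
    have hG : MeasurableSet[mI.prod (FX d t T X r)]
        ((fun p : Set.Icc t r × Paths d t T => K p.1 p.2) ⁻¹' B) := hK r htr hrT hB
    rw [hprod] at hG
    obtain ⟨C, hC, hCeq⟩ := hG
    have hset : (fun p : Set.Icc t r × Paths d t T =>
          if h : ∃ ω', X ω' = p.2 then K p.1 h.choose else m₀) ⁻¹' B
        = (C ∩ Prod.snd ⁻¹' S) ∪ (if m₀ ∈ B then (Prod.snd ⁻¹' Sᶜ) else ∅) := by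
      ext ⟨u, ω⟩
      by_cases h : ∃ ω', X ω' = ω
      · have hωS : ω ∈ S := ⟨h.choose, h.choose_spec⟩
        have hC' : (u, ω) ∈ C ↔ K u h.choose ∈ B := by
          have := Set.ext_iff.mp hCeq (u, h.choose)
          simpa [Prod.map, h.choose_spec] using this
        simp only [Set.mem_preimage, dif_pos h, Set.mem_union, Set.mem_inter_iff, hωS,
          and_true, hC']
        rcases Classical.em (m₀ ∈ B) with hm | hm <;> simp [hm, hωS]
      · have hωS : ω ∉ S := by
          rintro ⟨ω', rfl⟩; exact h ⟨ω', rfl⟩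
        simp only [Set.mem_preimage, dif_neg h, Set.mem_union, Set.mem_inter_iff, hωS,
          and_false, false_or]
        rcases Classical.em (m₀ ∈ B) with hm | hm <;> simp [hm, hωS]
    rw [hset]
    refine (claim C hC).union ?_
    split
    · exact hsndG hS.compl
    · exact @MeasurableSet.empty _ mG


end
end
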